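/- Suppose t is a canonical closed Ψ-term and t rewrites in one step to u in Ψ. Then there is a natural number n such that: (1) ⟦t⟧_w →h ⟦u⟧_w in one step of weak call-by-name reduction; (2) there is a canonical Ψ-term v with u →ⁿ v in Ψ; (3) for every m ≤ n and every w with u →ᵐ w in Ψ, the number of occurrences of the function symbol app in w equals the number of occurrences of app in u plus m; (4) for every such w, ⟦w⟧_w = ⟦u⟧_w. -/

import Mathlib

/-- Untyped λ-terms over variables drawn from ℕ (a denumerable totally ordered set). -/
inductive Lam : Type
  | var : ℕ → Lam
  | lam : ℕ → Lam → Lam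
  | app : Lam → Lam → Lam
deriving DecidableEq, Repr

namespace Lam

/-- Capture-permitting substitution M{N/x} (adequate for weak reduction of closed terms). -/
def subst : Lam → ℕ → Lam → Lam
  | var y, x, N => if y = x then N else var y
  | lam y M, x, N => if y = x then lam y M else lam y (subst M x N)
  | app M₁ M₂, x, N => app (subst M₁ x N) (subst M₂ x N)

/-- Simultaneous substitution along a partial assignment of terms to variables. -/
def msubst : Lam → (ℕ → Option Lam) → Lam
  | var y, σ => (σ y).getD (var y)
  | lam y M, σ => lam y (msubst M (fun z => if z = y then none else σ z))
  | app M₁ M₂, σ => app (msubst M₁ σ) (msubst M₂ σ)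

/-- The assignment sending each `xᵢ` to `tᵢ` (first match wins). -/
def substOf (xs : List ℕ) (ts : List Lam) : ℕ → Option Lam :=
  fun y => (xs.zip ts).lookup y

/-- Values: variables and abstractions. -/
def IsValue : Lam → Prop
  | var _ => True
  | lam _ _ => True
  | app _ _ => False

/-- Weak call-by-value reduction. -/
inductive CbvStep : Lam → Lam → Prop
  | beta {x : ℕ} {M V : Lam} : IsValue V → CbvStep (app (lam x M) V) (subst M x V)
  | appL {M N L : Lam} : CbvStep M N → CbvStep (app M L) (app N L)
  | appR {M N L : Lam} : CbvStep M N → CbvStep (app L M) (app L N)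

/-- A →v-normal form. -/
def CbvNormal (M : Lam) : Prop := ¬ ∃ N, CbvStep M N

/-- Free variables, as a finite set. -/
def fv : Lam → Finset ℕ
  | var x => {x}
  | lam x M => fv M \ {x}
  | app M N => fv M ∪ fv N

/-- The sequence (without repetitions, in variable order) of free variables of `M`. -/
def fvList (M : Lam) : List ℕ := (fv M).sort (· ≤ ·)

def Closed (M : Lam) : Prop := fv M = ∅

/-- The size |M| of a λ-term. -/
def size : Lam → ℕ
  | var _ => 1
  | lam _ M => size M + 1
  | app M N => size M + size N + 1

end Lam

/-- `NSteps r n a b`: `a` reduces to `b` in exactly `n` `r`-steps. -/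
def NSteps {α : Type*} (r : α → α → Prop) : ℕ → α → α → Prop
  | 0 => fun a b => a = b
  | n + 1 => fun a c => ∃ b, r a b ∧ NSteps r n b c

/-- Weak call-by-name reduction →h. -/
inductive CbnStep : Lam → Lam → Prop
  | beta {x : ℕ} {M N : Lam} : CbnStep (Lam.app (Lam.lam x M) N) (Lam.subst M x N)
  | appL {M M' L : Lam} : CbnStep M M' → CbnStep (Lam.app M L) (Lam.app M' L)

/-- Terms of the constructor rewrite system Ψ: variables, the binary function
symbol `app`, the binary constructor `capp`, and for every λ-term `M` and variable
`x` a constructor `c_{x,M}` (here `con x M`) of arity the length of FV(λx.M). -/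
inductive QTerm : Type
  | var : ℕ → QTerm
  | app : QTerm → QTerm → QTerm
  | capp : QTerm → QTerm → QTerm
  | con : ℕ → Lam → List QTerm → QTerm

namespace QTerm

/-- Well-formed Ψ-terms: arities are respected. -/
inductive WFQ : QTerm → Prop
  | var {x} : WFQ (var x)
  | app {u v} : WFQ u → WFQ v → WFQ (app u v)
  | capp {u v} : WFQ u → WFQ v → WFQ (capp u v)
  | con {x M ts} : ts.length = (Lam.fvList (Lam.lam x M)).length →
      (∀ t ∈ ts, WFQ t) → WFQ (con x M ts)

/-- Constructor terms of Ψ: built only from `capp` and the `c_{x,M}`. -/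
inductive IsConTermQ : QTerm → Prop
  | capp {u v} : IsConTermQ u → IsConTermQ v → IsConTermQ (capp u v)
  | con {x M ts} : (∀ t ∈ ts, IsConTermQ t) → IsConTermQ (con x M ts)

/-- Closed Ψ-terms: no variables. -/
inductive ClosedQ : QTerm → Prop
  | app {u v} : ClosedQ u → ClosedQ v → ClosedQ (app u v)
  | capp {u v} : ClosedQ u → ClosedQ v → ClosedQ (capp u v)
  | con {x M ts} : (∀ t ∈ ts, ClosedQ t) → ClosedQ (con x M ts)

/-- Canonical closed Ψ-terms: either a constructor term of the form
c_{x,M}(t₁,…,tₙ), or app(u,v) with u canonical and v a constructor term. -/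
inductive CanonicalQ : QTerm → Prop
  | con {x M ts} : (∀ t ∈ ts, IsConTermQ t) → CanonicalQ (con x M ts)
  | app {u v} : CanonicalQ u → IsConTermQ v → CanonicalQ (app u v)

/-- Substitution of Ψ-terms for variables. -/
def qsubst (σ : ℕ → Option QTerm) : QTerm → QTerm
  | var y => (σ y).getD (var y)
  | app u v => app (qsubst σ u) (qsubst σ v)
  | capp u v => capp (qsubst σ u) (qsubst σ v)
  | con x M ts => con x M (ts.attach.map (fun t => qsubst σ t.1))
decreasing_by
  all_goals simp_wf
  all_goals try have := List.sizeOf_lt_of_mem t.2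
  all_goals omega

/-- The assignment sending each `xᵢ` to `tᵢ`. -/
def substOfQ (xs : List ℕ) (ts : List QTerm) : ℕ → Option QTerm :=
  fun y => (xs.zip ts).lookup y

/-- The number of occurrences of the function symbol `app` in a Ψ-term. -/
def countApp : QTerm → ℕ
  | var _ => 0
  | app u v => countApp u + countApp v + 1
  | capp u v => countApp u + countApp v
  | con _ _ ts => (ts.attach.map (fun t => countApp t.1)).sum
decreasing_by
  all_goals simp_wf
  all_goals try have := List.sizeOf_lt_of_mem t.2
  all_goals omega

end QTerm

/-- The auxiliary translation ⟨·⟩'_w from λ-terms to Ψ-constructor terms. -/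
def transW' : Lam → QTerm
  | .var x => .var x
  | .lam x M => .con x M ((Lam.fvList (.lam x M)).map .var)
  | .app M N => .capp (transW' M) (transW' N)

/-- The translation ⟨·⟩_w from λ-terms to Ψ-terms. -/
def transW : Lam → QTerm
  | .var x => .var x
  | .lam x M => .con x M ((Lam.fvList (.lam x M)).map .var)
  | .app M N => .app (transW M) (transW' N)

/-- The readback ⟦·⟧_w from Ψ-terms to λ-terms. -/
def readbackW : QTerm → Lam
  | .var x => .var x
  | .app u v => .app (readbackW u) (readbackW v)
  | .capp u v => .app (readbackW u) (readbackW v)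
  | .con x M ts =>
      Lam.msubst (.lam x M)
        (Lam.substOf (Lam.fvList (.lam x M)) (ts.attach.map (fun t => readbackW t.1)))
decreasing_by
  all_goals simp_wf
  all_goals try have := List.sizeOf_lt_of_mem t.2
  all_goals omega

/-- One-step rewriting in Ψ: the five families of ordinary rules and the
administrative rule, with matched variables instantiated by constructor terms,
closed under arbitrary contexts. -/
inductive PsiStep : QTerm → QTerm → Prop
  | id_capp {z : ℕ} {w f : QTerm} :
      QTerm.IsConTermQ w → QTerm.IsConTermQ f →
      PsiStep (.app (.con z (.var z) []) (.capp w f)) (.app w f)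
  | id_con {z x : ℕ} {M : Lam} {ts : List QTerm} :
      (∀ t ∈ ts, QTerm.IsConTermQ t) →
      ts.length = (Lam.fvList (.lam x M)).length →
      PsiStep (.app (.con z (.var z) []) (.con x M ts)) (.con x M ts)
  | proj_capp {z w : ℕ} {f g h : QTerm} :
      w ≠ z → QTerm.IsConTermQ f → QTerm.IsConTermQ g → QTerm.IsConTermQ h →
      PsiStep (.app (.con z (.var w) [.capp f g]) h) (.app f g)
  | proj_con {z w x : ℕ} {M : Lam} {ts : List QTerm} {h : QTerm} :
      w ≠ z → (∀ t ∈ ts, QTerm.IsConTermQ t) →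
      ts.length = (Lam.fvList (.lam x M)).length →
      QTerm.IsConTermQ h →
      PsiStep (.app (.con z (.var w) [.con x M ts]) h) (.con x M ts)
  | beta {y : ℕ} {N : Lam} {ts : List QTerm} {v : QTerm} :
      (∀ z : ℕ, N ≠ .var z) →
      (∀ t ∈ ts, QTerm.IsConTermQ t) → QTerm.IsConTermQ v →
      ts.length = (Lam.fvList (.lam y N)).length →
      PsiStep (.app (.con y N ts) v)
        (QTerm.qsubst (QTerm.substOfQ (Lam.fvList (.lam y N) ++ [y]) (ts ++ [v]))
          (transW N))
  | adm {a b c : QTerm} :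
      QTerm.IsConTermQ a → QTerm.IsConTermQ b → QTerm.IsConTermQ c →
      PsiStep (.app (.capp a b) c) (.app (.app a b) c)
  | appL {u u' v} : PsiStep u u' → PsiStep (.app u v) (.app u' v)
  | appR {u v v'} : PsiStep v v' → PsiStep (.app u v) (.app u v')
  | cappL {u u' v} : PsiStep u u' → PsiStep (.capp u v) (.capp u' v)
  | cappR {u v v'} : PsiStep v v' → PsiStep (.capp u v) (.capp u v')
  | conArg {x M ts₁ t t' ts₂} : PsiStep t t' →
      PsiStep (.con x M (ts₁ ++ t :: ts₂)) (.con x M (ts₁ ++ t' :: ts₂))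

section ListLemmas
variable {α β : Type*}

lemma lookup_append (l₁ l₂ : List (ℕ × α)) (z : ℕ) :
    (l₁ ++ l₂).lookup z = ((l₁.lookup z).or (l₂.lookup z)) := by
  induction l₁ with
  | nil => simp [List.lookup]
  | cons p l ih =>
    by_cases h : z = p.1
    · simp [List.lookup, h]
    · simpa [List.lookup, beq_false_of_ne h] using ih

lemma lookup_zip_map (f : α → β) : ∀ (xs : List ℕ) (ts : List α) (z : ℕ),
    ((xs.zip ts).lookup z).map f = (xs.zip (ts.map f)).lookup z := by
  intro xs
  induction xs with
  | nil => intro ts z; simp [List.lookup]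
  | cons x xs ih =>
    intro ts z
    cases ts with
    | nil => simp [List.lookup]
    | cons t ts =>
      by_cases h : z = x
      · simp [List.lookup, h]
      · simpa [List.lookup, beq_false_of_ne h] using ih ts z

lemma lookup_zip_self (g : ℕ → α) : ∀ (ys : List ℕ) (z : ℕ), z ∈ ys →
    ((ys.zip (ys.map g)).lookup z) = some (g z) := by
  intro ys
  induction ys with
  | nil => simp
  | cons y ys ih =>
    intro z hz
    by_cases h : z = y
    · simp [List.lookup, h]
    · have : z ∈ ys := by simpa [h] using hz
      simpa [List.lookup, beq_false_of_ne h] using ih z this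

lemma lookup_zip_mem : ∀ (xs : List ℕ) (ts : List α) (z : ℕ), xs.length = ts.length →
    z ∈ xs → ∃ t ∈ ts, (xs.zip ts).lookup z = some t := by
  intro xs
  induction xs with
  | nil => simp
  | cons x xs ih =>
    intro ts z hlen hz
    cases ts with
    | nil => simp at hlen
    | cons t ts =>
      by_cases h : z = x
      · exact ⟨t, by simp, by simp [List.lookup, h]⟩
      · have hz' : z ∈ xs := by simpa [h] using hz
        obtain ⟨s, hs, hl⟩ := ih ts z (by simpa using hlen) hz'
        exact ⟨s, by simp [hs], by simpa [List.lookup, beq_false_of_ne h] using hl⟩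

lemma lookup_zip_not_mem : ∀ (xs : List ℕ) (ts : List α) (z : ℕ), z ∉ xs →
    (xs.zip ts).lookup z = none := by
  intro xs
  induction xs with
  | nil => simp [List.lookup]
  | cons x xs ih =>
    intro ts z hz
    cases ts with
    | nil => simp [List.lookup]
    | cons t ts =>
      have h1 : z ≠ x := fun h => hz (by simp [h])
      have h2 : z ∉ xs := fun h => hz (by simp [h])
      simpa [List.lookup, beq_false_of_ne h1] using ih ts z h2

lemma lookup_mem_values : ∀ (l : List (ℕ × α)) (z : ℕ) (t : α),
    l.lookup z = some t → t ∈ l.map Prod.snd := by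
  intro l
  induction l with
  | nil => simp [List.lookup]
  | cons p l ih =>
    intro z t h
    by_cases hz : z = p.1
    · simp [List.lookup, hz] at h
      simp [h]
    · simp only [List.lookup, beq_false_of_ne hz] at h
      simp only [List.map_cons, List.mem_cons]
      exact Or.inr (ih z t h)

end ListLemmas

namespace Lam

lemma subst_not_mem : ∀ (M : Lam) (y : ℕ) (V : Lam), y ∉ M.fv → M.subst y V = M := by
  intro M
  induction M with
  | var x => intro y V h; simp [fv] at h; simp [subst, Ne.symm h]
  | lam x M ih =>
    intro y V h
    by_cases hxy : x = y
    · simp [subst, hxy]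
    · have : y ∉ M.fv := by
        intro hy; exact h (by simp [fv, hy, Ne.symm hxy])
      simp [subst, hxy, ih y V this]
  | app M N ihM ihN =>
    intro y V h
    simp [fv] at h
    simp [subst, ihM y V h.1, ihN y V h.2]

lemma msubst_congr : ∀ (M : Lam) (σ₁ σ₂ : ℕ → Option Lam),
    (∀ z ∈ M.fv, (σ₁ z).getD (var z) = (σ₂ z).getD (var z)) → M.msubst σ₁ = M.msubst σ₂ := by
  intro M
  induction M with
  | var x => intro σ₁ σ₂ h; simpa [msubst] using h x (by simp [fv])
  | lam x M ih =>
    intro σ₁ σ₂ h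
    simp only [msubst, lam.injEq, true_and]
    apply ih
    intro z hz
    by_cases hzx : z = x
    · simp [hzx]
    · simpa [hzx] using h z (by simp [fv, hz, hzx])
  | app M N ihM ihN =>
    intro σ₁ σ₂ h
    simp only [msubst, app.injEq]
    exact ⟨ihM _ _ fun z hz => h z (by simp [fv, hz]),
           ihN _ _ fun z hz => h z (by simp [fv, hz])⟩

lemma fv_msubst : ∀ (M : Lam) (σ : ℕ → Option Lam),
    (∀ z t, σ z = some t → t.fv = ∅) →
    (M.msubst σ).fv ⊆ M.fv.filter (fun z => σ z = none) := by
  intro M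
  induction M with
  | var x =>
    intro σ h
    cases hx : σ x with
    | none => simp [msubst, fv, hx]
    | some t => simp [msubst, fv, hx, h x t hx]
  | lam x M ih =>
    intro σ h
    intro w hw
    simp only [msubst, fv, Finset.mem_sdiff, Finset.mem_singleton] at hw
    obtain ⟨hw1, hw2⟩ := hw
    have := ih (fun z => if z = x then none else σ z)
      (fun z t hzt => by
        by_cases hzx : z = x
        · simp [hzx] at hzt
        · exact h z t (by simpa [hzx] using hzt)) hw1
    simp only [Finset.mem_filter] at this
    simp only [fv, Finset.mem_filter, Finset.mem_sdiff, Finset.mem_singleton]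
    refine ⟨⟨this.1, hw2⟩, ?_⟩
    have := this.2
    simpa [hw2] using this
  | app M N ihM ihN =>
    intro σ h
    intro w hw
    simp only [msubst, fv, Finset.mem_union] at hw
    rcases hw with hw | hw
    · have := ihM σ h hw
      simp only [Finset.mem_filter] at this ⊢
      simp [fv, this.1, this.2]
    · have := ihN σ h hw
      simp only [Finset.mem_filter] at this ⊢
      simp [fv, this.1, this.2]

lemma msubst_closed (M : Lam) (σ : ℕ → Option Lam)
    (h : ∀ z t, σ z = some t → t.fv = ∅)
    (hcov : ∀ z ∈ M.fv, (σ z).isSome) : (M.msubst σ).fv = ∅ := by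
  have := fv_msubst M σ h
  ext w
  simp only [Finset.notMem_empty, iff_false]
  intro hw
  have hm := this hw
  simp only [Finset.mem_filter] at hm
  have := hcov w hm.1
  rw [hm.2] at this
  simp at this

lemma subst_msubst : ∀ (M : Lam) (σ : ℕ → Option Lam) (y : ℕ) (V : Lam),
    (∀ z t, σ z = some t → t.fv = ∅) → σ y = none →
    (M.msubst σ).subst y V = M.msubst (fun z => if z = y then some V else σ z) := by
  intro M
  induction M with
  | var x =>
    intro σ y V h hy
    by_cases hxy : x = y
    · simp [msubst, hxy, hy, subst]
    · cases hx : σ x with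
      | none => simp [msubst, hx, subst, hxy]
      | some t =>
        have : y ∉ t.fv := by simp [h x t hx]
        simp [msubst, hx, hxy, subst_not_mem t y V this]
  | lam x M ih =>
    intro σ y V h hy
    by_cases hxy : x = y
    · subst hxy
      simp only [msubst, subst, if_pos rfl, if_true, lam.injEq, true_and]
      apply msubst_congr
      intro z hz
      by_cases hzx : z = x <;> simp [hzx]
    · simp only [msubst, subst, if_neg hxy, lam.injEq, true_and]
      rw [ih (fun z => if z = x then none else σ z) y V
        (fun z t hzt => by
          by_cases hzx : z = x
          · simp [hzx] at hzt
          · exact h z t (by simpa [hzx] using hzt))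
        (by simp [Ne.symm hxy, hy])]
      apply msubst_congr
      intro z hz
      by_cases hzx : z = x
      · simp [hzx, hxy]
      · have hyx : ¬ y = x := fun hh => hxy hh.symm
        by_cases hzy : z = y <;> simp [hzx, hzy, hyx]
  | app M N ihM ihN =>
    intro σ y V h hy
    simp [msubst, subst, ihM σ y V h hy, ihN σ y V h hy]

end Lam

namespace QTerm

@[simp] lemma readback_var (x : ℕ) : readbackW (.var x) = .var x := by simp [readbackW]
@[simp] lemma readback_app (u v : QTerm) :
    readbackW (.app u v) = .app (readbackW u) (readbackW v) := by simp [readbackW]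
@[simp] lemma readback_capp (u v : QTerm) :
    readbackW (.capp u v) = .app (readbackW u) (readbackW v) := by simp [readbackW]
lemma readback_con (x : ℕ) (M : Lam) (ts : List QTerm) :
    readbackW (.con x M ts) =
      Lam.msubst (.lam x M) (Lam.substOf (Lam.fvList (.lam x M)) (ts.map readbackW)) := by
  simp [readbackW, List.attach_map_val]

lemma qsubst_con (σ : ℕ → Option QTerm) (x : ℕ) (M : Lam) (ts : List QTerm) :
    qsubst σ (.con x M ts) = .con x M (ts.map (qsubst σ)) := by
  simp [qsubst, List.attach_map_val]
@[simp] lemma qsubst_var (σ : ℕ → Option QTerm) (x : ℕ) :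
    qsubst σ (.var x) = (σ x).getD (.var x) := by simp [qsubst]
@[simp] lemma qsubst_app (σ : ℕ → Option QTerm) (u v : QTerm) :
    qsubst σ (.app u v) = .app (qsubst σ u) (qsubst σ v) := by simp [qsubst]
@[simp] lemma qsubst_capp (σ : ℕ → Option QTerm) (u v : QTerm) :
    qsubst σ (.capp u v) = .capp (qsubst σ u) (qsubst σ v) := by simp [qsubst]

@[simp] lemma countApp_var (x : ℕ) : countApp (.var x) = 0 := by simp [countApp]
@[simp] lemma countApp_app (u v : QTerm) :
    countApp (.app u v) = countApp u + countApp v + 1 := by simp [countApp]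
@[simp] lemma countApp_capp (u v : QTerm) :
    countApp (.capp u v) = countApp u + countApp v := by simp [countApp]
lemma countApp_con (x : ℕ) (M : Lam) (ts : List QTerm) :
    countApp (.con x M ts) = (ts.map countApp).sum := by
  simp [countApp, List.attach_map_val]

lemma conterm_countApp : ∀ {s : QTerm}, IsConTermQ s → countApp s = 0 := by
  intro s h
  induction h with
  | capp hu hv ihu ihv => simp [ihu, ihv]
  | con hts ih =>
    rw [countApp_con]
    apply List.sum_eq_zero
    intro c hc
    simp only [List.mem_map] at hc
    obtain ⟨t, ht, rfl⟩ := hc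
    exact ih t ht

lemma conterm_normal : ∀ {s u : QTerm}, PsiStep s u → IsConTermQ s → False := by
  intro s u h
  induction h with
  | cappL _ ih => intro hc; cases hc with | capp h1 h2 => exact ih h1
  | cappR _ ih => intro hc; cases hc with | capp h1 h2 => exact ih h2
  | conArg _ ih =>
    intro hc
    cases hc with | con hts => exact ih (hts _ (by simp))
  | appL _ _ => intro hc; cases hc
  | appR _ _ => intro hc; cases hc
  | _ => intro hc; cases hc

end QTerm

namespace QTerm

lemma mem_fvList {M : Lam} {z : ℕ} : z ∈ Lam.fvList M ↔ z ∈ Lam.fv M := by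
  simp [Lam.fvList, Finset.mem_sort]

lemma closed_con_readback : ∀ {s : QTerm}, IsConTermQ s → WFQ s → ClosedQ s →
    (readbackW s).fv = ∅ := by
  intro s h
  induction h with
  | capp hu hv ihu ihv =>
    intro hwf hcl
    cases hwf with | capp hwu hwv =>
    cases hcl with | capp hcu hcv =>
    simp [Lam.fv, ihu hwu hcu, ihv hwv hcv]
  | @con x M ts hts ih =>
    intro hwf hcl
    cases hwf with | con hlen hwts =>
    cases hcl with | con hcts =>
    rw [readback_con]
    apply Lam.msubst_closed
    · intro z t hzt
      have := lookup_mem_values _ z t hzt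
      simp only [List.mem_map] at this
      obtain ⟨p, hp, rfl⟩ := this
      have hsnd := (List.of_mem_zip hp).2
      simp only [List.mem_map] at hsnd
      obtain ⟨q, hq, hq2⟩ := hsnd
      rw [← hq2]
      exact ih q hq (hwts q hq) (hcts q hq)
    · intro z hz
      have hz' : z ∈ Lam.fvList (.lam x M) := mem_fvList.2 hz
      obtain ⟨t, _, hl⟩ := lookup_zip_mem (Lam.fvList (.lam x M)) (ts.map readbackW) z
        (by simp [← hlen]) hz'
      simp [Lam.substOf, hl]

lemma rb_qsubst_transW' : ∀ (P : Lam) (σ : ℕ → Option QTerm),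
    readbackW (qsubst σ (transW' P)) = Lam.msubst P (fun z => (σ z).map readbackW) := by
  intro P
  induction P with
  | var x =>
    intro σ
    cases hx : σ x with
    | none => simp [transW', Lam.msubst, hx]
    | some t => simp [transW', Lam.msubst, hx]
  | app M N ihM ihN =>
    intro σ
    simp [transW', Lam.msubst, ihM σ, ihN σ]
  | lam x M ih =>
    intro σ
    simp only [transW', qsubst_con, List.map_map, readback_con]
    apply Lam.msubst_congr
    intro z hz
    have hz' : z ∈ Lam.fvList (.lam x M) := mem_fvList.2 hz
    have : (Lam.fvList (.lam x M)).map (readbackW ∘ (qsubst σ ∘ QTerm.var)) =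
        (Lam.fvList (.lam x M)).map (fun w => ((σ w).map readbackW).getD (.var w)) := by
      apply List.map_congr_left
      intro w _
      cases hw : σ w with
      | none => simp [hw]
      | some t => simp [hw]
    rw [Lam.substOf, this, lookup_zip_self _ _ _ hz']
    cases hzz : σ z with
    | none => simp [hzz]
    | some t => simp [hzz]

lemma rb_qsubst_transW : ∀ (P : Lam) (σ : ℕ → Option QTerm),
    readbackW (qsubst σ (transW P)) = Lam.msubst P (fun z => (σ z).map readbackW) := by
  intro P
  induction P with
  | var x =>
    intro σ
    cases hx : σ x with
    | none => simp [transW, Lam.msubst, hx]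
    | some t => simp [transW, Lam.msubst, hx]
  | app M N ihM _ =>
    intro σ
    simp [transW, Lam.msubst, ihM σ, rb_qsubst_transW' N σ]
  | lam x M _ =>
    intro σ
    have : transW (.lam x M) = transW' (.lam x M) := by simp [transW, transW']
    rw [this, rb_qsubst_transW']

end QTerm

namespace QTerm

/-- Left `capp`-spine depth of a constructor term. -/
def cdep : QTerm → ℕ
  | .capp a _ => cdep a + 1
  | _ => 0

/-- Invariant of terms reached from a canonical term by one step: `n` counts the
remaining administrative steps before reaching a canonical term. -/
inductive Pre : QTerm → ℕ → Prop
  | con {x M ts} : (∀ t ∈ ts, IsConTermQ t) → Pre (.con x M ts) 0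
  | app {c v} : IsConTermQ c → IsConTermQ v → Pre (.app c v) (cdep c)
  | appS {u v n} : Pre u n → IsConTermQ v → Pre (.app u v) n

lemma pre_con_inv {x M ts n} (h : Pre (.con x M ts) n) : n = 0 := by
  cases h with
  | con _ => rfl

lemma pre_capp_inv {a b n} (h : Pre (.capp a b) n) : False := by cases h

lemma pre_zero_canonical : ∀ {u : QTerm}, Pre u 0 → CanonicalQ u := by
  intro u h
  generalize hn : 0 = n at h
  induction h with
  | con hts => exact CanonicalQ.con hts
  | @app c v hc hv =>
    cases hc with
    | capp _ _ => simp [cdep] at hn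
    | con hts => exact CanonicalQ.app (CanonicalQ.con hts) hv
  | appS hu hv ih => exact CanonicalQ.app (ih hn) hv

lemma pre_succ_step : ∀ {u : QTerm} {n : ℕ}, Pre u (n + 1) →
    ∃ w, PsiStep u w ∧ Pre w n := by
  intro u n h
  generalize hn : n + 1 = m at h
  induction h generalizing n with
  | con _ => omega
  | @app c v hc hv =>
    cases hc with
    | @capp a b ha hb =>
      refine ⟨.app (.app a b) v, PsiStep.adm ha hb hv, ?_⟩
      have : n = cdep a := by simpa [cdep] using hn
      subst this
      exact Pre.appS (Pre.app ha hb) hv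
    | con hts => simp [cdep] at hn
  | @appS u' v m' hu hv ih =>
    subst hn
    obtain ⟨w, hw, hpw⟩ := ih rfl
    exact ⟨.app w v, PsiStep.appL hw, Pre.appS hpw hv⟩

lemma pre_step : ∀ {u : QTerm} {n : ℕ}, Pre u (n + 1) → ∀ {w}, PsiStep u w →
    Pre w n ∧ countApp w = countApp u + 1 ∧ readbackW w = readbackW u := by
  intro u n h
  generalize hn : n + 1 = m at h
  induction h generalizing n with
  | con _ => omega
  | @app c v hc hv =>
    intro w hw
    cases hc with
    | con _ => simp [cdep] at hn
    | @capp a b ha hb =>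
      have hcab : IsConTermQ (.capp a b) := IsConTermQ.capp ha hb
      cases hw with
      | adm =>
        have : n = cdep a := by simpa [cdep] using hn
        subst this
        refine ⟨Pre.appS (Pre.app ha hb) hv, ?_, by simp⟩
        simp [conterm_countApp ha, conterm_countApp hb, conterm_countApp hv]
      | appL hs => exact absurd hcab (fun hc => conterm_normal hs hc)
      | appR hs => exact absurd hv (fun hc => conterm_normal hs hc)
  | @appS u' v m' hu hv ih =>
    subst hn
    intro w hw
    cases hw with
    | appL hs =>
      obtain ⟨h1, h2, h3⟩ := ih rfl hs
      exact ⟨Pre.appS h1 hv, by simp [h2]; omega, by simp [h3]⟩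
    | appR hs => exact absurd hv (fun hc => conterm_normal hs hc)
    | id_capp _ _ => exact absurd (pre_con_inv hu) (by omega)
    | id_con _ _ => exact absurd (pre_con_inv hu) (by omega)
    | proj_capp _ _ _ _ => exact absurd (pre_con_inv hu) (by omega)
    | proj_con _ _ _ _ => exact absurd (pre_con_inv hu) (by omega)
    | beta _ _ _ _ => exact absurd (pre_con_inv hu) (by omega)
    | adm _ _ _ => exact (pre_capp_inv hu).elim

lemma pre_reaches_canonical : ∀ (n : ℕ) {u : QTerm}, Pre u n →
    ∃ v, NSteps PsiStep n u v ∧ CanonicalQ v := by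
  intro n
  induction n with
  | zero => intro u h; exact ⟨u, rfl, pre_zero_canonical h⟩
  | succ n ih =>
    intro u h
    obtain ⟨w, hw, hpw⟩ := pre_succ_step h
    obtain ⟨v, hv, hcv⟩ := ih hpw
    exact ⟨v, ⟨w, hw, hv⟩, hcv⟩

lemma pre_counts : ∀ (m : ℕ) {n : ℕ} {u : QTerm}, Pre u n → m ≤ n →
    ∀ {w : QTerm}, NSteps PsiStep m u w →
    countApp w = countApp u + m ∧ readbackW w = readbackW u := by
  intro m
  induction m with
  | zero =>
    intro n u _ _ w hw
    cases hw
    simp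
  | succ m ih =>
    intro n u hp hmn w hw
    obtain ⟨u₁, h₁, h₂⟩ := hw
    obtain ⟨n', rfl⟩ : ∃ n', n = n' + 1 := ⟨n - 1, by omega⟩
    obtain ⟨hp₁, hc₁, hr₁⟩ := pre_step hp h₁
    obtain ⟨hc₂, hr₂⟩ := ih hp₁ (by omega) h₂
    exact ⟨by omega, by rw [hr₂, hr₁]⟩

end QTerm

namespace QTerm

/-- Coverage: σ assigns constructor terms to all free variables of P. -/
def Covers (σ : ℕ → Option QTerm) (P : Lam) : Prop :=
  ∀ z ∈ Lam.fv P, ∃ s, σ z = some s ∧ IsConTermQ s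

lemma covers_transW'_con : ∀ (P : Lam) (σ : ℕ → Option QTerm), Covers σ P →
    IsConTermQ (qsubst σ (transW' P)) := by
  intro P
  induction P with
  | var x =>
    intro σ hcov
    obtain ⟨s, hs, hcs⟩ := hcov x (by simp [Lam.fv])
    simpa [transW', hs] using hcs
  | app M N ihM ihN =>
    intro σ hcov
    show IsConTermQ (qsubst σ (.capp (transW' M) (transW' N)))
    rw [qsubst_capp]
    exact IsConTermQ.capp
      (ihM σ fun z hz => hcov z (by simp [Lam.fv, hz]))
      (ihN σ fun z hz => hcov z (by simp [Lam.fv, hz]))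
  | lam x M _ =>
    intro σ hcov
    rw [transW', qsubst_con]
    apply IsConTermQ.con
    intro t ht
    simp only [List.map_map, List.mem_map] at ht
    obtain ⟨z, hz, rfl⟩ := ht
    obtain ⟨s, hs, hcs⟩ := hcov z (mem_fvList.1 hz)
    simpa [hs] using hcs

lemma covers_transW_pre : ∀ (P : Lam) (σ : ℕ → Option QTerm), Covers σ P →
    ∀ w, IsConTermQ w → ∃ n, Pre (.app (qsubst σ (transW P)) w) n := by
  intro P
  induction P with
  | var x =>
    intro σ hcov w hw
    obtain ⟨s, hs, hcs⟩ := hcov x (by simp [Lam.fv])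
    exact ⟨cdep s, by simpa [transW, hs] using Pre.app hcs hw⟩
  | lam x M _ =>
    intro σ hcov w hw
    refine ⟨0, ?_⟩
    have h1 : transW (.lam x M) = transW' (.lam x M) := by simp [transW, transW']
    have h2 := covers_transW'_con (.lam x M) σ hcov
    rw [h1] at *
    rw [transW', qsubst_con] at *
    simpa [cdep] using Pre.app h2 hw
  | app M N ihM _ =>
    intro σ hcov w hw
    have hN : IsConTermQ (qsubst σ (transW' N)) :=
      covers_transW'_con N σ fun z hz => hcov z (by simp [Lam.fv, hz])
    obtain ⟨n, hn⟩ := ihM σ (fun z hz => hcov z (by simp [Lam.fv, hz])) (qsubst σ (transW' N)) hN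
    exact ⟨n, by simpa [transW] using Pre.appS hn hw⟩

lemma readback_id_con (z : ℕ) : readbackW (.con z (.var z) []) = .lam z (.var z) := by
  have hfv : Lam.fvList (.lam z (.var z)) = [] := by
    simp [Lam.fvList, Lam.fv]
  rw [readback_con, hfv]
  simp [Lam.msubst, Lam.substOf, List.lookup]

lemma readback_proj_con (z w : ℕ) (hwz : w ≠ z) (s : QTerm) :
    readbackW (.con z (.var w) [s]) = .lam z (readbackW s) := by
  have hfv : Lam.fvList (.lam z (.var w)) = [w] := by
    have : Lam.fv (.lam z (.var w)) = {w} := by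
      ext a
      simp only [Lam.fv, Finset.mem_sdiff, Finset.mem_singleton]
      constructor
      · rintro ⟨h1, _⟩; exact h1
      · rintro rfl; exact ⟨rfl, hwz⟩
    simp [Lam.fvList, this]
  rw [readback_con, hfv]
  simp [Lam.msubst, Lam.substOf, List.lookup, hwz]

end QTerm

namespace QTerm

lemma beta_case {y : ℕ} {N : Lam} {ts : List QTerm} {v : QTerm}
    (hNv : ∀ z : ℕ, N ≠ .var z)
    (hts : ∀ t ∈ ts, IsConTermQ t) (hv : IsConTermQ v)
    (hlen : ts.length = (Lam.fvList (.lam y N)).length)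
    (hwts : ∀ t ∈ ts, WFQ t) (hwv : WFQ v)
    (hcts : ∀ t ∈ ts, ClosedQ t) (hcv : ClosedQ v) :
    CbnStep (readbackW (.app (.con y N ts) v))
      (readbackW (qsubst (substOfQ (Lam.fvList (.lam y N) ++ [y]) (ts ++ [v])) (transW N)))
    ∧ ∃ n, Pre (qsubst (substOfQ (Lam.fvList (.lam y N) ++ [y]) (ts ++ [v])) (transW N)) n := by
  set xs := Lam.fvList (.lam y N) with hxs
  set Ls := ts.map readbackW with hLs
  set σQ := substOfQ (xs ++ [y]) (ts ++ [v]) with hσQ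
  have hyxs : y ∉ xs := by
    intro h
    have := mem_fvList.1 h
    simp [Lam.fv] at this
  have hmemfv : ∀ z ∈ Lam.fv N, z ∈ xs ++ [y] := by
    intro z hz
    by_cases hzy : z = y
    · simp [hzy]
    · have : z ∈ Lam.fv (.lam y N) := by simp [Lam.fv, hz, hzy]
      simp [show z ∈ xs from mem_fvList.2 this]
  have hlen2 : (xs ++ [y]).length = (ts ++ [v]).length := by simp [hlen]
  have hcov : Covers σQ N := by
    intro z hz
    obtain ⟨s, hs, hl⟩ := lookup_zip_mem (xs ++ [y]) (ts ++ [v]) z hlen2 (hmemfv z hz)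
    refine ⟨s, hl, ?_⟩
    rcases List.mem_append.1 hs with h | h
    · exact hts s h
    · simp at h; rw [h]; exact hv
  -- the readback of the redex
  have hrb_t : readbackW (.app (.con y N ts) v) =
      .app (.lam y (N.msubst (fun z => if z = y then none else Lam.substOf xs Ls z)))
        (readbackW v) := by
    simp only [readback_app, readback_con]
    rfl
  -- images of the list substitution are closed
  have himg : ∀ z t, Lam.substOf xs Ls z = some t → t.fv = ∅ := by
    intro z t hzt
    have := lookup_mem_values _ z t hzt
    simp only [List.mem_map] at this
    obtain ⟨p, hp, rfl⟩ := this
    have hsnd := (List.of_mem_zip hp).2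
    rw [hLs] at hsnd
    simp only [List.mem_map] at hsnd
    obtain ⟨q, hq, hq2⟩ := hsnd
    rw [← hq2]
    exact closed_con_readback (hts q hq) (hwts q hq) (hcts q hq)
  have hvcl : (readbackW v).fv = ∅ := closed_con_readback hv hwv hcv
  -- the two substitutions agree
  have hσeq : (fun z => if z = y then some (readbackW v)
        else if z = y then none else Lam.substOf xs Ls z) =
      (fun z => (σQ z).map readbackW) := by
    funext z
    have : (σQ z).map readbackW = ((xs.zip Ls) ++ [(y, readbackW v)]).lookup z := by
      rw [hσQ]
      show (((xs ++ [y]).zip (ts ++ [v])).lookup z).map readbackW = _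
      rw [lookup_zip_map]
      congr 1
      rw [List.map_append, List.zip_append (by simpa using hlen.symm)]
      simp [hLs]
    rw [this, lookup_append]
    by_cases hzy : z = y
    · subst hzy
      rw [lookup_zip_not_mem _ _ _ hyxs]
      simp [List.lookup]
    · simp only [if_neg hzy]
      have : ([(y, readbackW v)]).lookup z = none := by
        simp [List.lookup, beq_false_of_ne hzy]
      rw [this, Option.or_none]
      rfl
  constructor
  · rw [hrb_t]
    have hbeta := CbnStep.beta (x := y)
      (M := N.msubst (fun z => if z = y then none else Lam.substOf xs Ls z))
      (N := readbackW v)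
    have hsub : (N.msubst (fun z => if z = y then none else Lam.substOf xs Ls z)).subst y
        (readbackW v) = readbackW (qsubst σQ (transW N)) := by
      rw [Lam.subst_msubst N _ y (readbackW v)
        (by
          intro z t hzt
          by_cases hzy : z = y
          · simp [hzy] at hzt
          · exact himg z t (by simpa [hzy] using hzt))
        (by simp)]
      rw [rb_qsubst_transW, ← hσeq]
    rw [← hsub]
    exact hbeta
  · -- Pre of the result
    cases hN : N with
    | var z => exact absurd hN (hNv z)
    | lam x P =>
      refine ⟨0, ?_⟩
      rw [transW, qsubst_con]
      apply Pre.con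
      intro t ht
      simp only [List.map_map, List.mem_map] at ht
      obtain ⟨z, hz, rfl⟩ := ht
      obtain ⟨s, hs, hcs⟩ := hcov z (by rw [hN]; exact mem_fvList.1 hz)
      simpa [hs] using hcs
    | app A B =>
      have hB : IsConTermQ (qsubst σQ (transW' B)) :=
        covers_transW'_con B σQ fun z hz => hcov z (by simp [hN, Lam.fv, hz])
      obtain ⟨n, hn⟩ := covers_transW_pre A σQ
        (fun z hz => hcov z (by simp [hN, Lam.fv, hz])) (qsubst σQ (transW' B)) hB
      exact ⟨n, by simpa [transW] using hn⟩

end QTerm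

namespace QTerm

lemma main_pre : ∀ {t u : QTerm}, CanonicalQ t → WFQ t → ClosedQ t → PsiStep t u →
    CbnStep (readbackW t) (readbackW u) ∧ ∃ n, Pre u n := by
  intro t u hcan
  induction hcan generalizing u with
  | con hts =>
    intro _ _ hstep
    exact absurd (IsConTermQ.con hts) (fun hc => conterm_normal hstep hc)
  | @app u₀ v hcanu hconv ih =>
    intro hwf hcl hstep
    cases hwf with | app hwu hwv =>
    cases hcl with | app hcu hcv =>
    cases hstep with
    | appL hs =>
      obtain ⟨hcbn, n, hpre⟩ := ih hwu hcu hs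
      refine ⟨?_, n, Pre.appS hpre hconv⟩
      simp only [readback_app]
      exact CbnStep.appL hcbn
    | appR hs => exact absurd hconv (fun hc => conterm_normal hs hc)
    | adm _ _ _ => cases hcanu
    | @id_capp z w f hw hf =>
      constructor
      · simp only [readback_app, readback_capp, readback_id_con]
        have := CbnStep.beta (x := z) (M := .var z)
          (N := .app (readbackW w) (readbackW f))
        simpa [Lam.subst] using this
      · exact ⟨cdep w, Pre.app hw hf⟩
    | @id_con z x M ts' hts' hlen' =>
      constructor
      · simp only [readback_app, readback_id_con]
        have := CbnStep.beta (x := z) (M := .var z) (N := readbackW (.con x M ts'))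
        simpa [Lam.subst] using this
      · exact ⟨0, Pre.con hts'⟩
    | @proj_capp z w f g _ hwz hf hg hh =>
      have hwcfg : WFQ (QTerm.capp f g) := by
        cases hwu with | con _ hw2 => exact hw2 _ (by simp)
      have hccfg : ClosedQ (QTerm.capp f g) := by
        cases hcu with | con hc2 => exact hc2 _ (by simp)
      have hclosed : (readbackW (QTerm.capp f g)).fv = ∅ :=
        closed_con_readback (IsConTermQ.capp hf hg) hwcfg hccfg
      refine ⟨?_, ⟨cdep f, Pre.app hf hg⟩⟩
      simp only [readback_app]
      rw [readback_proj_con z w hwz]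
      have hbeta := CbnStep.beta (x := z) (M := readbackW (QTerm.capp f g))
        (N := readbackW v)
      have heq : (readbackW (QTerm.capp f g)).subst z (readbackW v) =
          Lam.app (readbackW f) (readbackW g) := by
        rw [Lam.subst_not_mem _ z _ (by rw [hclosed]; simp)]
        simp
      rwa [heq] at hbeta
    | @proj_con z w x M ts' _ hwz hts' hlen' hh =>
      have hwcon : WFQ (QTerm.con x M ts') := by
        cases hwu with | con _ hw2 => exact hw2 _ (by simp)
      have hccon : ClosedQ (QTerm.con x M ts') := by
        cases hcu with | con hc2 => exact hc2 _ (by simp)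
      have hclosed : (readbackW (QTerm.con x M ts')).fv = ∅ :=
        closed_con_readback (IsConTermQ.con hts') hwcon hccon
      refine ⟨?_, ⟨0, Pre.con hts'⟩⟩
      simp only [readback_app]
      rw [readback_proj_con z w hwz]
      have hbeta := CbnStep.beta (x := z) (M := readbackW (QTerm.con x M ts'))
        (N := readbackW v)
      rwa [Lam.subst_not_mem _ z _ (by rw [hclosed]; simp)] at hbeta
    | @beta y N ts' v' hNv hts' hv' hlen' =>
      have hwts : ∀ t ∈ ts', WFQ t := by
        cases hwu with | con _ hw2 => exact hw2
      have hcts : ∀ t ∈ ts', ClosedQ t := by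
        cases hcu with | con hc2 => exact hc2
      exact beta_case hNv hts' hv' hlen' hwts hwv hcts hcv

end QTerm


/-- If a canonical closed Ψ-term t rewrites in one step to u, then there is n such
that: (1) ⟦t⟧_w →h ⟦u⟧_w; (2) u rewrites in n steps to some canonical term v;
(3) whenever u →ᵐ w with m ≤ n, the number of occurrences of app in w is that of u
plus m; and (4) for every such w, ⟦w⟧_w = ⟦u⟧_w. -/
theorem psi_simulation (t u : QTerm)
    (hwf : QTerm.WFQ t) (hcl : QTerm.ClosedQ t) (hcan : QTerm.CanonicalQ t)
    (hstep : PsiStep t u) :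
    ∃ n : ℕ,
      CbnStep (readbackW t) (readbackW u) ∧
      (∃ v : QTerm, NSteps PsiStep n u v ∧ QTerm.CanonicalQ v) ∧
      (∀ m, m ≤ n → ∀ w : QTerm, NSteps PsiStep m u w →
        QTerm.countApp w = QTerm.countApp u + m) ∧
      (∀ m, m ≤ n → ∀ w : QTerm, NSteps PsiStep m u w →
        readbackW w = readbackW u) := by
  obtain ⟨hcbn, n, hpre⟩ := QTerm.main_pre hcan hwf hcl hstep
  refine ⟨n, hcbn, QTerm.pre_reaches_canonical n hpre, ?_, ?_⟩
  · intro m hm w hw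
    exact (QTerm.pre_counts m hpre hm hw).1
  · intro m hm w hw
    exact (QTerm.pre_counts m hpre hm hw).2
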